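/- Let η₁,…,ηₙ be i.i.d. random variables with P(ηᵢ = 1) = P(ηᵢ = −1) = 1/2. Then E( sup_{β ∈ ℝ^p : |β|₁ ≤ L} Σ_{i=1}^n ηᵢ (x_iβ)² ) ≤ L² (2Mn log(2p²))^{1/2}. -/

import Mathlib

open MeasureTheory ProbabilityTheory Real

lemma rad_ae {Ω : Type*} [MeasureSpace Ω] [IsProbabilityMeasure (ℙ : Measure Ω)]
    (Y : Ω → ℝ) (hY : Measurable Y)
    (h1 : ℙ {ω | Y ω = 1} = 1/2) (h2 : ℙ {ω | Y ω = -1} = 1/2) :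
    ∀ᵐ ω ∂ℙ, Y ω = 1 ∨ Y ω = -1 := by
  have hA : MeasurableSet {ω | Y ω = 1} := hY (measurableSet_singleton 1)
  have hB : MeasurableSet {ω | Y ω = -1} := hY (measurableSet_singleton (-1))
  have hdisj : Disjoint {ω | Y ω = 1} {ω | Y ω = -1} := by
    rw [Set.disjoint_left]; intro ω hω1 hω2
    simp only [Set.mem_setOf_eq] at hω1 hω2; rw [hω1] at hω2; norm_num at hω2
  have hunion : ℙ ({ω | Y ω = 1} ∪ {ω | Y ω = -1}) = 1 := by
    rw [measure_union hdisj hB, h1, h2]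
    rw [ENNReal.div_add_div_same, one_add_one_eq_two]
    exact ENNReal.div_self (two_ne_zero) (ENNReal.ofNat_ne_top)
  have hcompl : ℙ ({ω | Y ω = 1} ∪ {ω | Y ω = -1})ᶜ = 0 := by
    rw [measure_compl (hA.union hB) (measure_ne_top _ _), hunion, measure_univ]; simp
  have haemem : ∀ᵐ ω ∂ℙ, ω ∈ {ω | Y ω = 1} ∪ {ω | Y ω = -1} := by
    rw [MeasureTheory.ae_iff]
    exact hcompl
  filter_upwards [haemem] with ω hω
  exact hω

lemma rad_exp_moment {Ω : Type*} [MeasureSpace Ω] [IsProbabilityMeasure (ℙ : Measure Ω)]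
    (Y : Ω → ℝ) (hY : Measurable Y)
    (h1 : ℙ {ω | Y ω = 1} = 1/2) (h2 : ℙ {ω | Y ω = -1} = 1/2) (s : ℝ) :
    ∫ ω, exp (s * Y ω) ∂ℙ = (exp s + exp (-s)) / 2 := by
  have hA : MeasurableSet {ω | Y ω = 1} := hY (measurableSet_singleton 1)
  have hB : MeasurableSet {ω | Y ω = -1} := hY (measurableSet_singleton (-1))
  set A := {ω | Y ω = 1}
  set B := {ω | Y ω = -1}
  have hae := rad_ae Y hY h1 h2
  have hcongr : (fun ω => exp (s * Y ω)) =ᵐ[ℙ]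
      (fun ω => A.indicator (fun _ => exp s) ω + B.indicator (fun _ => exp (-s)) ω) := by
    filter_upwards [hae] with ω hω
    rcases hω with h | h
    · have hωA : ω ∈ A := h
      have hωB : ω ∉ B := by simp only [B, Set.mem_setOf_eq, h]; norm_num
      simp [Set.indicator_of_mem hωA, Set.indicator_of_notMem hωB, h]
    · have hωB : ω ∈ B := h
      have hωA : ω ∉ A := by simp only [A, Set.mem_setOf_eq, h]; norm_num
      simp [Set.indicator_of_mem hωB, Set.indicator_of_notMem hωA, h, mul_neg]
  rw [integral_congr_ae hcongr, integral_add
    ((integrable_const _).indicator hA) ((integrable_const _).indicator hB),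
    integral_indicator_const _ hA, integral_indicator_const _ hB, measureReal_def, measureReal_def, h1, h2]
  simp only [smul_eq_mul]
  rw [ENNReal.toReal_div]
  simp
  ring

lemma rad_mgf_sum {Ω : Type*} [MeasureSpace Ω] [IsProbabilityMeasure (ℙ : Measure Ω)]
    {n : ℕ} (η : Fin n → Ω → ℝ)
    (hmeas : ∀ i, Measurable (η i))
    (hindep : iIndepFun η ℙ)
    (hdist : ∀ i, ℙ {ω | η i ω = 1} = 1 / 2 ∧ ℙ {ω | η i ω = -1} = 1 / 2)
    (a : Fin n → ℝ) (t : ℝ) :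
    mgf (fun ω => ∑ i, a i * η i ω) ℙ t ≤ exp (t ^ 2 * (∑ i, (a i) ^ 2) / 2) := by
  set X : Fin n → Ω → ℝ := fun i ω => a i * η i ω with hX
  have hXm : ∀ i, Measurable (X i) := fun i => (hmeas i).const_mul (a i)
  have hXindep : iIndepFun X ℙ :=
    hindep.comp (fun i (y : ℝ) => a i * y) (fun i => measurable_const_mul _)
  have heq : (fun ω => ∑ i, a i * η i ω) = ∑ i, X i := by
    funext ω; simp [X, Finset.sum_apply]
  rw [heq, hXindep.mgf_sum hXm Finset.univ]
  calc ∏ i, mgf (X i) ℙ t ≤ ∏ i, exp ((t * a i) ^ 2 / 2) := by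
        apply Finset.prod_le_prod (fun i _ => mgf_nonneg)
        intro i _
        have : mgf (X i) ℙ t = ∫ ω, exp ((t * a i) * η i ω) ∂ℙ := by
          simp only [mgf, X]
          congr 1; funext ω; ring_nf
        rw [this, rad_exp_moment (η i) (hmeas i) (hdist i).1 (hdist i).2]
        have := Real.cosh_le_exp_half_sq (t * a i)
        rwa [Real.cosh_eq] at this
    _ = exp (∑ i, (t * a i) ^ 2 / 2) := by rw [Real.exp_sum]
    _ = exp (t ^ 2 * (∑ i, (a i) ^ 2) / 2) := by
        congr 1
        rw [← Finset.sum_div, Finset.mul_sum]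
        congr 1
        exact Finset.sum_congr rfl fun i _ => by ring


lemma expect_sup'_le {Ω : Type*} [MeasureSpace Ω] [IsProbabilityMeasure (ℙ : Measure Ω)]
    {κ : Type*} [Fintype κ] [Nonempty κ]
    (Z : κ → Ω → ℝ) (hZm : ∀ a, Measurable (Z a))
    (C : ℝ) (hC : ∀ a, ∀ᵐ ω ∂ℙ, |Z a ω| ≤ C)
    (v : ℝ) (hv : 0 < v)
    (hmgf : ∀ a (t : ℝ), 0 < t → mgf (Z a) ℙ t ≤ exp (t ^ 2 * v / 2))
    (hN : 1 < (Fintype.card κ : ℝ)) :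
    ∫ ω, Finset.univ.sup' Finset.univ_nonempty (fun a => Z a ω) ∂ℙ
      ≤ Real.sqrt (2 * v * Real.log (Fintype.card κ)) := by
  set N : ℝ := (Fintype.card κ : ℝ) with hNdef
  set W : Ω → ℝ := fun ω => Finset.univ.sup' Finset.univ_nonempty (fun a => Z a ω) with hW
  have hWm : Measurable W := by
    have h := Finset.measurable_sup' (s := (Finset.univ : Finset κ)) Finset.univ_nonempty
      (fun a _ => hZm a)
    have he : W = (Finset.univ.sup' Finset.univ_nonempty Z : Ω → ℝ) := by
      funext ω; exact (Finset.sup'_apply _ _ _).symm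
    rw [he]; exact h
  have hCae : ∀ᵐ ω ∂ℙ, ∀ a, |Z a ω| ≤ C := (MeasureTheory.ae_all_iff).2 hC
  have hWbd : ∀ᵐ ω ∂ℙ, ‖W ω‖ ≤ C := by
    filter_upwards [hCae] with ω h
    rw [Real.norm_eq_abs, abs_le]
    constructor
    · have ha := h (Classical.arbitrary κ)
      calc -C ≤ Z (Classical.arbitrary κ) ω := by have := (abs_le.1 ha).1; linarith
        _ ≤ W ω := Finset.le_sup' (fun a => Z a ω) (Finset.mem_univ _)
    · exact Finset.sup'_le _ _ fun a _ => (abs_le.1 (h a)).2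
  have hWint : Integrable W ℙ :=
    Integrable.mono' (integrable_const C) hWm.aestronglyMeasurable hWbd
  have hlogN : 0 < Real.log N := Real.log_pos hN
  have hNpos : (0:ℝ) < N := by linarith
  have key : ∀ t : ℝ, 0 < t → (∫ ω, W ω ∂ℙ) ≤ Real.log N / t + t * v / 2 := by
    intro t ht
    have hexpint : ∀ a, Integrable (fun ω => exp (t * Z a ω)) ℙ := by
      intro a
      refine Integrable.mono' (integrable_const (exp (t * C)))
        ((hZm a).const_mul t).exp.aestronglyMeasurable ?_
      filter_upwards [hC a] with ω h
      rw [Real.norm_eq_abs, abs_of_pos (exp_pos _), exp_le_exp]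
      exact mul_le_mul_of_nonneg_left ((abs_le.1 h).2) ht.le
    have hexpWint : Integrable (fun ω => exp (t * W ω)) ℙ := by
      refine Integrable.mono' (integrable_const (exp (t * C)))
        (hWm.const_mul t).exp.aestronglyMeasurable ?_
      filter_upwards [hWbd] with ω h
      rw [Real.norm_eq_abs, abs_of_pos (exp_pos _), exp_le_exp]
      rw [Real.norm_eq_abs] at h
      exact mul_le_mul_of_nonneg_left ((abs_le.1 h).2) ht.le
    have jensen : exp (∫ ω, t * W ω ∂ℙ) ≤ ∫ ω, exp (t * W ω) ∂ℙ := by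
      have := convexOn_exp.map_integral_le (continuous_exp.continuousOn) isClosed_univ
        (MeasureTheory.ae_of_all _ (fun ω => Set.mem_univ (t * W ω)))
        (hWint.const_mul t) (by exact hexpWint)
      exact this
    have hsum : (∫ ω, exp (t * W ω) ∂ℙ) ≤ N * exp (t ^ 2 * v / 2) := by
      have hptw : ∀ ω, exp (t * W ω) ≤ ∑ a : κ, exp (t * Z a ω) := by
        intro ω
        obtain ⟨a, -, ha⟩ := Finset.exists_mem_eq_sup' (Finset.univ_nonempty (α := κ))
          (fun a => Z a ω)
        have : W ω = Z a ω := ha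
        rw [this]
        exact Finset.single_le_sum (f := fun b => exp (t * Z b ω))
          (fun b _ => (exp_pos _).le) (Finset.mem_univ a)
      calc (∫ ω, exp (t * W ω) ∂ℙ) ≤ ∫ ω, ∑ a : κ, exp (t * Z a ω) ∂ℙ :=
            integral_mono hexpWint (integrable_finset_sum _ fun a _ => hexpint a) hptw
        _ = ∑ a : κ, ∫ ω, exp (t * Z a ω) ∂ℙ := integral_finset_sum _ fun a _ => hexpint a
        _ = ∑ a : κ, mgf (Z a) ℙ t := rfl
        _ ≤ ∑ _a : κ, exp (t ^ 2 * v / 2) := Finset.sum_le_sum fun a _ => hmgf a t ht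
        _ = N * exp (t ^ 2 * v / 2) := by
            rw [Finset.sum_const, nsmul_eq_mul]
            simp [hNdef]
    have hchain : exp (t * ∫ ω, W ω ∂ℙ) ≤ N * exp (t ^ 2 * v / 2) := by
      rw [← MeasureTheory.integral_const_mul]
      exact le_trans jensen hsum
    have hlog : t * (∫ ω, W ω ∂ℙ) ≤ Real.log N + t ^ 2 * v / 2 := by
      have h1 : t * (∫ ω, W ω ∂ℙ) ≤ Real.log (N * exp (t ^ 2 * v / 2)) := by
        rw [Real.le_log_iff_exp_le (by positivity)]
        exact hchain
      rwa [Real.log_mul (ne_of_gt hNpos) (exp_ne_zero _), Real.log_exp] at h1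
    have h2 : (∫ ω, W ω ∂ℙ) ≤ (Real.log N + t ^ 2 * v / 2) / t := by
      rw [le_div_iff₀ ht]
      linarith [hlog]
    calc (∫ ω, W ω ∂ℙ) ≤ (Real.log N + t ^ 2 * v / 2) / t := h2
      _ = Real.log N / t + t * v / 2 := by field_simp
  set S : ℝ := Real.sqrt (2 * v * Real.log N) with hSdef
  have hS2 : S ^ 2 = 2 * v * Real.log N := Real.sq_sqrt (by positivity)
  have hSpos : 0 < S := Real.sqrt_pos.2 (by positivity)
  have ht0 : 0 < S / v := div_pos hSpos hv
  have := key (S / v) ht0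
  have heq : Real.log N / (S / v) + (S / v) * v / 2 = S := by
    field_simp
    nlinarith [hS2, hSpos, hv]
  rw [heq] at this
  exact this

/-- For i.i.d. Rademacher signs `η₁,…,ηₙ`,
`E sup_{|β|₁ ≤ L} Σ_i ηᵢ (x_iβ)² ≤ L² (2 M n log(2p²))^{1/2}`. -/
theorem stmt8 {Ω : Type*} [MeasureSpace Ω] [IsProbabilityMeasure (ℙ : Measure Ω)]
    (n p : ℕ) (hn : 0 < n) (hp : 0 < p)
    (x : Fin n → Fin p → ℝ)
    (M : ℝ) (hM : M = ⨆ j : Fin p, (1 / n : ℝ) * ∑ i, x i j ^ 4)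
    (L : ℝ) (hL : 0 < L)
    (η : Fin n → Ω → ℝ)
    (hmeas : ∀ i, Measurable (η i))
    (hindep : iIndepFun η ℙ)
    (hdist : ∀ i, ℙ {ω | η i ω = 1} = 1 / 2 ∧ ℙ {ω | η i ω = -1} = 1 / 2) :
    (∫ ω, ⨆ β : {b : Fin p → ℝ // ∑ j, |b j| ≤ L},
        ∑ i, η i ω * (∑ j, x i j * β.1 j) ^ 2 ∂ℙ)
      ≤ L ^ 2 * Real.sqrt (2 * M * n * Real.log (2 * (p : ℝ) ^ 2)) := by
  have hn' : (0:ℝ) < n := by exact_mod_cast hn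
  haveI : Nonempty (Fin p) := ⟨⟨0, hp⟩⟩
  haveI hβne : Nonempty {b : Fin p → ℝ // ∑ j, |b j| ≤ L} :=
    ⟨⟨fun _ => (0:ℝ), by simp [hL.le]⟩⟩
  have hcol : ∀ j, (1 / n : ℝ) * ∑ i, x i j ^ 4 ≤ M := by
    intro j
    rw [hM]
    exact le_ciSup (f := fun j : Fin p => (1 / (n:ℝ)) * ∑ i, x i j ^ 4)
      (Set.Finite.bddAbove (Set.finite_range _)) j
  have hbdd : ∀ j, (∑ i, x i j ^ 4) ≤ n * M := by
    intro j
    have h := hcol j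
    have he : (∑ i, x i j ^ 4) = (n:ℝ) * ((1/n:ℝ) * ∑ i, x i j ^ 4) := by
      field_simp
    rw [he]
    exact mul_le_mul_of_nonneg_left h hn'.le
  have hM0 : 0 ≤ M :=
    le_trans (by positivity) (hcol (Classical.arbitrary (Fin p)))
  rcases hM0.eq_or_lt with hMeq | hMpos
  · -- degenerate case M = 0 : all x vanish
    have hx : ∀ i j, x i j = 0 := by
      intro i j
      have h1 : (∑ i, x i j ^ 4) ≤ 0 := by
        have := hbdd j; rw [← hMeq] at this; simpa using this
      have h2 : (∑ i, x i j ^ 4) = 0 :=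
        le_antisymm h1 (Finset.sum_nonneg fun i _ => by positivity)
      have h3 := (Finset.sum_eq_zero_iff_of_nonneg
        (fun i _ => by positivity : ∀ i ∈ Finset.univ, (0:ℝ) ≤ x i j ^ 4)).1 h2 i
        (Finset.mem_univ i)
      exact pow_eq_zero_iff (by norm_num) |>.1 h3
    have hzero : (fun ω => ⨆ β : {b : Fin p → ℝ // ∑ j, |b j| ≤ L},
        ∑ i, η i ω * (∑ j, x i j * β.1 j) ^ 2) = fun _ => (0:ℝ) := by
      funext ω
      have hv : ∀ β : {b : Fin p → ℝ // ∑ j, |b j| ≤ L},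
          (∑ i, η i ω * (∑ j, x i j * β.1 j) ^ 2) = 0 := by
        intro β; simp [hx]
      simp only [hv]
      exact ciSup_const
    rw [hzero]
    rw [integral_const]
    simp only [smul_eq_mul, mul_zero]
    positivity
  · -- main case 0 < M
    set v : ℝ := (n:ℝ) * M with hv
    have hvpos : 0 < v := by positivity
    set Z : Bool × Fin p × Fin p → Ω → ℝ :=
      fun a ω => ∑ i, (_root_.cond a.1 (1:ℝ) (-1) * (x i a.2.1 * x i a.2.2)) * η i ω with hZ
    have hZm : ∀ a, Measurable (Z a) := fun a =>
      Finset.measurable_sum _ (fun i _ => (hmeas i).const_mul _)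
    have haeη : ∀ᵐ ω ∂ℙ, ∀ i, |η i ω| ≤ 1 := by
      rw [MeasureTheory.ae_all_iff]
      intro i
      filter_upwards [rad_ae (η i) (hmeas i) (hdist i).1 (hdist i).2] with ω h
      rcases h with h | h <;> rw [h] <;> norm_num
    set C : ℝ := ∑ i, ∑ j, ∑ k, |x i j * x i k| with hCdef
    have hC : ∀ a, ∀ᵐ ω ∂ℙ, |Z a ω| ≤ C := by
      intro a
      filter_upwards [haeη] with ω h
      calc |Z a ω| ≤ ∑ i, |(_root_.cond a.1 (1:ℝ) (-1) * (x i a.2.1 * x i a.2.2)) * η i ω| :=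
            Finset.abs_sum_le_sum_abs _ _
        _ ≤ ∑ i, |x i a.2.1 * x i a.2.2| := by
            apply Finset.sum_le_sum
            intro i _
            rw [abs_mul, abs_mul]
            have hsg : |_root_.cond a.1 (1:ℝ) (-1)| = 1 := by cases a.1 <;> simp
            rw [hsg, one_mul]
            calc |x i a.2.1 * x i a.2.2| * |η i ω|
                ≤ |x i a.2.1 * x i a.2.2| * 1 :=
                  mul_le_mul_of_nonneg_left (h i) (abs_nonneg _)
              _ = |x i a.2.1 * x i a.2.2| := mul_one _
        _ ≤ C := by
            rw [hCdef]
            apply Finset.sum_le_sum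
            intro i _
            calc |x i a.2.1 * x i a.2.2| ≤ ∑ k, |x i a.2.1 * x i k| :=
                Finset.single_le_sum (f := fun k => |x i a.2.1 * x i k|)
                  (fun k _ => abs_nonneg _) (Finset.mem_univ _)
              _ ≤ ∑ j, ∑ k, |x i j * x i k| :=
                Finset.single_le_sum (f := fun j => ∑ k, |x i j * x i k|)
                  (fun j _ => Finset.sum_nonneg fun k _ => abs_nonneg _) (Finset.mem_univ _)
    have hmgfZ : ∀ a (t:ℝ), 0 < t → mgf (Z a) ℙ t ≤ exp (t^2 * v / 2) := by
      intro a t _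
      have h1 := rad_mgf_sum η hmeas hindep hdist
        (fun i => _root_.cond a.1 (1:ℝ) (-1) * (x i a.2.1 * x i a.2.2)) t
      refine le_trans h1 ?_
      rw [exp_le_exp]
      have hsum : (∑ i, (_root_.cond a.1 (1:ℝ) (-1) * (x i a.2.1 * x i a.2.2))^2)
          = ∑ i, (x i a.2.1)^2 * (x i a.2.2)^2 := by
        apply Finset.sum_congr rfl
        intro i _
        have hsq : (_root_.cond a.1 (1:ℝ) (-1))^2 = 1 := by cases a.1 <;> norm_num
        rw [mul_pow, hsq, one_mul, mul_pow]
      rw [hsum]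
      have hcs : (∑ i, (x i a.2.1)^2 * (x i a.2.2)^2) ≤ v := by
        have h2 : (∑ i, (x i a.2.1)^2 * (x i a.2.2)^2)^2
            ≤ (∑ i, ((x i a.2.1)^2)^2) * (∑ i, ((x i a.2.2)^2)^2) :=
          Finset.sum_mul_sq_le_sq_mul_sq _ _ _
        have e1 : (∑ i, ((x i a.2.1)^2)^2) = ∑ i, (x i a.2.1)^4 :=
          Finset.sum_congr rfl fun i _ => by ring
        have e2 : (∑ i, ((x i a.2.2)^2)^2) = ∑ i, (x i a.2.2)^4 :=
          Finset.sum_congr rfl fun i _ => by ring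
        rw [e1, e2] at h2
        have hS0 : (0:ℝ) ≤ ∑ i, (x i a.2.1)^2 * (x i a.2.2)^2 :=
          Finset.sum_nonneg fun i _ => by positivity
        have hA0 : (0:ℝ) ≤ ∑ i, (x i a.2.1)^4 :=
          Finset.sum_nonneg fun i _ => by positivity
        have hB0 : (0:ℝ) ≤ ∑ i, (x i a.2.2)^4 :=
          Finset.sum_nonneg fun i _ => by positivity
        nlinarith [hbdd a.2.1, hbdd a.2.2, hvpos.le,
          sq_nonneg ((∑ i, (x i a.2.1)^2 * (x i a.2.2)^2) - v),
          sq_nonneg ((∑ i, (x i a.2.1)^2 * (x i a.2.2)^2) + v)]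
      have ht2 : (0:ℝ) ≤ t^2 := sq_nonneg t
      nlinarith [hcs, ht2]
    have hcardκ : ((Fintype.card (Bool × Fin p × Fin p) : ℕ) : ℝ) = 2 * (p:ℝ)^2 := by
      simp [Fintype.card_prod]
      push_cast
      ring
    have hNgt : 1 < ((Fintype.card (Bool × Fin p × Fin p) : ℕ) : ℝ) := by
      rw [hcardκ]
      have h1 : (1:ℝ) ≤ p := by exact_mod_cast hp
      nlinarith
    set W : Ω → ℝ := fun ω => Finset.univ.sup' Finset.univ_nonempty (fun a => Z a ω)
      with hWdef
    have hEW : (∫ ω, W ω ∂ℙ)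
        ≤ Real.sqrt (2 * v * Real.log (Fintype.card (Bool × Fin p × Fin p))) := by
      rw [hWdef]
      exact expect_sup'_le Z hZm C hC v hvpos hmgfZ hNgt
    have hWm : Measurable W := by
      have h := Finset.measurable_sup' (s := (Finset.univ : Finset (Bool × Fin p × Fin p)))
        Finset.univ_nonempty (fun a _ => hZm a)
      have he : W = (Finset.univ.sup' Finset.univ_nonempty Z : Ω → ℝ) := by
        funext ω; rw [hWdef]; exact (Finset.sup'_apply _ _ _).symm
      rw [he]; exact h
    have hWbd : ∀ᵐ ω ∂ℙ, ‖W ω‖ ≤ C := by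
      have hCae : ∀ᵐ ω ∂ℙ, ∀ a, |Z a ω| ≤ C := (MeasureTheory.ae_all_iff).2 hC
      filter_upwards [hCae] with ω h
      rw [Real.norm_eq_abs, abs_le]
      constructor
      · have ha := h (Classical.arbitrary _)
        calc -C ≤ Z (Classical.arbitrary _) ω := by
              have := (abs_le.1 ha).1; linarith
          _ ≤ W ω := Finset.le_sup' (fun a => Z a ω) (Finset.mem_univ _)
      · exact Finset.sup'_le _ _ fun a _ => (abs_le.1 (h a)).2
    have hWint : Integrable W ℙ :=
      Integrable.mono' (integrable_const C) hWm.aestronglyMeasurable hWbd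
    -- pointwise nonnegativity of W
    have hZtrue : ∀ ω (j k : Fin p), Z (true, j, k) ω = ∑ i, x i j * x i k * η i ω := by
      intro ω j k
      rw [hZ]
      exact Finset.sum_congr rfl fun i _ => by norm_num
    have hZfalse : ∀ ω (j k : Fin p), Z (false, j, k) ω = -∑ i, x i j * x i k * η i ω := by
      intro ω j k
      rw [hZ, ← Finset.sum_neg_distrib]
      exact Finset.sum_congr rfl fun i _ => by simp only [_root_.cond_false]; ring
    have hWnn : ∀ ω, 0 ≤ W ω := by
      intro ω
      set j₀ : Fin p := Classical.arbitrary (Fin p)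
      have h1 : Z (true, j₀, j₀) ω ≤ W ω :=
        Finset.le_sup' (fun a => Z a ω) (Finset.mem_univ _)
      have h2 : Z (false, j₀, j₀) ω ≤ W ω :=
        Finset.le_sup' (fun a => Z a ω) (Finset.mem_univ _)
      have h3 : Z (true, j₀, j₀) ω + Z (false, j₀, j₀) ω = 0 := by
        rw [hZtrue, hZfalse]; ring
      linarith
    have habs : ∀ ω (j k : Fin p), |∑ i, x i j * x i k * η i ω| ≤ W ω := by
      intro ω j k
      rw [abs_le]
      constructor
      · have h2 : Z (false, j, k) ω ≤ W ω :=
          Finset.le_sup' (fun a => Z a ω) (Finset.mem_univ _)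
        rw [hZfalse] at h2
        linarith
      · have h1 : Z (true, j, k) ω ≤ W ω :=
          Finset.le_sup' (fun a => Z a ω) (Finset.mem_univ _)
        rw [hZtrue] at h1
        linarith
    -- key pointwise bound
    have hkey : ∀ ω (β : {b : Fin p → ℝ // ∑ j, |b j| ≤ L}),
        (∑ i, η i ω * (∑ j, x i j * β.1 j) ^ 2) ≤ L ^ 2 * W ω := by
      intro ω β
      have expand : (∑ i, η i ω * (∑ j, x i j * β.1 j) ^ 2)
          = ∑ j, ∑ k, β.1 j * β.1 k * (∑ i, x i j * x i k * η i ω) := by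
        have h1 : ∀ i, η i ω * (∑ j, x i j * β.1 j) ^ 2
            = ∑ j, ∑ k, β.1 j * β.1 k * (x i j * x i k * η i ω) := by
          intro i
          rw [sq, Finset.sum_mul_sum, Finset.mul_sum]
          refine Finset.sum_congr rfl fun j _ => ?_
          rw [Finset.mul_sum]
          exact Finset.sum_congr rfl fun k _ => by ring
        simp_rw [h1]
        rw [Finset.sum_comm]
        refine Finset.sum_congr rfl fun j _ => ?_
        rw [Finset.sum_comm]
        exact Finset.sum_congr rfl fun k _ => (Finset.mul_sum _ _ _).symm
      rw [expand]
      calc ∑ j, ∑ k, β.1 j * β.1 k * (∑ i, x i j * x i k * η i ω)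
          ≤ ∑ j, ∑ k, |β.1 j| * |β.1 k| * W ω := by
            refine Finset.sum_le_sum fun j _ => Finset.sum_le_sum fun k _ => ?_
            calc β.1 j * β.1 k * (∑ i, x i j * x i k * η i ω)
                ≤ |β.1 j * β.1 k * (∑ i, x i j * x i k * η i ω)| := le_abs_self _
              _ = |β.1 j| * |β.1 k| * |∑ i, x i j * x i k * η i ω| := by
                  rw [abs_mul, abs_mul]
              _ ≤ |β.1 j| * |β.1 k| * W ω :=
                  mul_le_mul_of_nonneg_left (habs ω j k) (by positivity)
        _ = (∑ j, |β.1 j|) * (∑ k, |β.1 k|) * W ω := by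
            rw [Finset.sum_mul_sum, Finset.sum_mul]
            exact Finset.sum_congr rfl fun j _ => by rw [Finset.sum_mul]
        _ ≤ L * L * W ω := by
            have hβ := β.2
            have h0 : (0:ℝ) ≤ ∑ j, |β.1 j| := Finset.sum_nonneg fun j _ => abs_nonneg _
            exact mul_le_mul_of_nonneg_right (mul_le_mul hβ hβ h0 hL.le) (hWnn ω)
        _ = L ^ 2 * W ω := by ring
    have hsup_le : ∀ ω, (⨆ β : {b : Fin p → ℝ // ∑ j, |b j| ≤ L},
        ∑ i, η i ω * (∑ j, x i j * β.1 j) ^ 2) ≤ L ^ 2 * W ω := fun ω =>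
      ciSup_le (fun β => hkey ω β)
    have hsup_nn : ∀ ω, 0 ≤ (⨆ β : {b : Fin p → ℝ // ∑ j, |b j| ≤ L},
        ∑ i, η i ω * (∑ j, x i j * β.1 j) ^ 2) := by
      intro ω
      have hb : BddAbove (Set.range fun β : {b : Fin p → ℝ // ∑ j, |b j| ≤ L} =>
          ∑ i, η i ω * (∑ j, x i j * β.1 j) ^ 2) :=
        ⟨L^2 * W ω, by rintro y ⟨β, rfl⟩; exact hkey ω β⟩
      have h0 := le_ciSup hb (⟨fun _ => (0:ℝ), by simp [hL.le]⟩ :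
        {b : Fin p → ℝ // ∑ j, |b j| ≤ L})
      simpa using h0
    calc (∫ ω, ⨆ β : {b : Fin p → ℝ // ∑ j, |b j| ≤ L},
        ∑ i, η i ω * (∑ j, x i j * β.1 j) ^ 2 ∂ℙ)
        ≤ ∫ ω, L^2 * W ω ∂ℙ :=
          integral_mono_of_nonneg (MeasureTheory.ae_of_all _ hsup_nn)
            (hWint.const_mul _) (MeasureTheory.ae_of_all _ hsup_le)
      _ = L^2 * ∫ ω, W ω ∂ℙ := MeasureTheory.integral_const_mul _ _
      _ ≤ L^2 * Real.sqrt (2 * v * Real.log (Fintype.card (Bool × Fin p × Fin p))) :=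
          mul_le_mul_of_nonneg_left hEW (by positivity)
      _ = L ^ 2 * Real.sqrt (2 * M * n * Real.log (2 * (p : ℝ) ^ 2)) := by
          rw [hcardκ]
          congr 2
          rw [hv]
          ring
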